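/- Let H be a finite graph whose edges are each colored either 'odd' or 'even'. Then there exists a subset S of V(H) such that, after flipping the color of every edge with exactly one endpoint in S, the number of even edges is at least the number of odd edges. -/

import Mathlib

/-- The coloring obtained from `c` by flipping the color of every edge with
exactly one endpoint in `S`. -/
def flipColoring {V : Type*} [DecidableEq V] (c : Sym2 V → ZMod 2) (S : Finset V) :
    Sym2 V → ZMod 2 :=
  fun e => c e +
    Sym2.lift ⟨fun a b => (if a ∈ S then (1 : ZMod 2) else 0) + (if b ∈ S then 1 else 0),
      fun a b => add_comm _ _⟩ e

lemma flip_toggle {V : Type*} [DecidableEq V] (c : Sym2 V → ZMod 2) (S : Finset V)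
    {a b : V} (hab : a ≠ b) :
    flipColoring c (symmDiff S {a}) (Sym2.mk a b) =
      flipColoring c S (Sym2.mk a b) + 1 := by
  have ha : a ∈ symmDiff S {a} ↔ a ∉ S := by
    simp [Finset.mem_symmDiff]
  have hb : b ∈ symmDiff S {a} ↔ b ∈ S := by
    simp [Finset.mem_symmDiff, hab.symm]
  simp only [flipColoring, Sym2.lift_mk, ha, hb]
  by_cases h1 : a ∈ S <;> by_cases h2 : b ∈ S <;>
    simp [h1, h2] <;> ring_nf <;> simp [show (2 : ZMod 2) = 0 from rfl]

lemma key {V : Type*} [Fintype V] [DecidableEq V] (c : Sym2 V → ZMod 2)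
    {a b : V} (hab : a ≠ b) :
    (Finset.univ.filter (fun S : Finset V => flipColoring c S (Sym2.mk a b) = 1)).card
      = (Finset.univ.filter (fun S : Finset V =>
          flipColoring c S (Sym2.mk a b) = 0)).card := by
  apply Finset.card_bij' (fun S _ => symmDiff S {a}) (fun S _ => symmDiff S {a})
  · intro S _
    exact symmDiff_symmDiff_cancel_right {a} S
  · intro S _
    exact symmDiff_symmDiff_cancel_right {a} S
  · intro S hS
    simp only [Finset.mem_filter, Finset.mem_univ, true_and] at hS ⊢
    rw [flip_toggle c S hab, hS]
    decide
  · intro S hS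
    simp only [Finset.mem_filter, Finset.mem_univ, true_and] at hS ⊢
    rw [flip_toggle c S hab, hS]
    decide

theorem stmt11 {V : Type*} [Fintype V] [DecidableEq V] (G : SimpleGraph V)
    [DecidableRel G.Adj] (c : Sym2 V → ZMod 2) :
    ∃ S : Finset V,
      (G.edgeFinset.filter (fun e => flipColoring c S e = 1)).card ≤
      (G.edgeFinset.filter (fun e => flipColoring c S e = 0)).card := by
  by_contra h
  push_neg at h
  have hsum : ∀ (v : ZMod 2),
      ∑ S : Finset V, (G.edgeFinset.filter (fun e => flipColoring c S e = v)).card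
        = ∑ e ∈ G.edgeFinset,
            (Finset.univ.filter (fun S : Finset V => flipColoring c S e = v)).card := by
    intro v
    simp only [Finset.card_filter]
    rw [Finset.sum_comm]
  have heq : ∑ S : Finset V, (G.edgeFinset.filter (fun e => flipColoring c S e = 1)).card
      = ∑ S : Finset V, (G.edgeFinset.filter (fun e => flipColoring c S e = 0)).card := by
    rw [hsum 1, hsum 0]
    apply Finset.sum_congr rfl
    intro e he
    induction e with
    | _ a b =>
      have hab : a ≠ b := by
        rw [SimpleGraph.mem_edgeFinset, SimpleGraph.mem_edgeSet] at he
        exact he.ne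
      exact key c hab
  have hlt : ∑ S : Finset V, (G.edgeFinset.filter (fun e => flipColoring c S e = 0)).card
      < ∑ S : Finset V, (G.edgeFinset.filter (fun e => flipColoring c S e = 1)).card :=
    Finset.sum_lt_sum_of_nonempty Finset.univ_nonempty (fun S _ => h S)
  omega
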